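/- The metric space T²_{1,2}(ℕ) = {{1},{2}} ∪ {{1,n} : n ≥ 3} ∪ {{2,m} : m ≥ 3}, with the symmetric difference metric, does not admit a bi-Lipschitz embedding into c₀ with distortion strictly less than 2. Precisely, there is no map f : T²_{1,2}(ℕ) → c₀ and constant C < 2 such that d(σ,τ) ≤ ‖f(σ) − f(τ)‖_∞ ≤ C·d(σ,τ) for all σ, τ. -/

import Mathlib

open Filter Finset

/-- The subset `T²_{1,2}(ℕ) = {{1},{2}} ∪ {{1,n} : n ≥ 3} ∪ {{2,m} : m ≥ 3}` of the
countably branching tree of height 2, with the symmetric difference metric. -/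
def T12 : Set (Finset ℕ) :=
  {({1} : Finset ℕ), ({2} : Finset ℕ)} ∪
    {σ | ∃ n ≥ 3, σ = ({1, n} : Finset ℕ)} ∪ {σ | ∃ m ≥ 3, σ = ({2, m} : Finset ℕ)}

/-- Aharoni's lower bound: `T²_{1,2}(ℕ)` does not embed into `c₀` with distortion
strictly less than `2`. -/
theorem T12_no_embedding_distortion_lt_two :
    ¬ ∃ (C : ℝ), C < 2 ∧ ∃ f : Finset ℕ → (ℕ → ℝ),
      (∀ σ ∈ T12, Tendsto (f σ) atTop (nhds 0)) ∧
      (∀ σ ∈ T12, ∀ τ ∈ T12,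
        ((symmDiff σ τ).card : ℝ) ≤ (⨆ n, |f σ n - f τ n|) ∧
        (⨆ n, |f σ n - f τ n|) ≤ C * ((symmDiff σ τ).card : ℝ)) := by
  rintro ⟨C, hC, f, hf0, hf⟩
  -- memberships
  have hm1 : ({1} : Finset ℕ) ∈ T12 := Or.inl (Or.inl (Or.inl rfl))
  have hm2 : ({2} : Finset ℕ) ∈ T12 := Or.inl (Or.inl (Or.inr rfl))
  have hmx : ∀ n : ℕ, 3 ≤ n → ({1, n} : Finset ℕ) ∈ T12 :=
    fun n hn => Or.inl (Or.inr ⟨n, hn, rfl⟩)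
  have hmy : ∀ m : ℕ, 3 ≤ m → ({2, m} : Finset ℕ) ∈ T12 :=
    fun m hm => Or.inr ⟨m, hm, rfl⟩
  -- boundedness of coordinate differences
  have bdd : ∀ σ ∈ T12, ∀ τ ∈ T12, BddAbove (Set.range fun k => |f σ k - f τ k|) := by
    intro σ hσ τ hτ
    have h : Tendsto (fun k => |f σ k - f τ k|) atTop (nhds |(0:ℝ) - 0|) :=
      ((hf0 σ hσ).sub (hf0 τ hτ)).abs
    exact h.bddAbove_range
  have coord : ∀ σ ∈ T12, ∀ τ ∈ T12, ∀ k,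
      |f σ k - f τ k| ≤ C * ((symmDiff σ τ).card : ℝ) := by
    intro σ hσ τ hτ k
    exact le_trans (le_ciSup (bdd σ hσ τ hτ) k) (hf σ hσ τ hτ).2
  -- card computations
  have c12 : (symmDiff ({1} : Finset ℕ) {2}).card = 2 := by decide
  have c1n : ∀ n : ℕ, 3 ≤ n → (symmDiff ({1, n} : Finset ℕ) {1}).card = 1 := by
    intro n hn
    have h : symmDiff ({1, n} : Finset ℕ) {1} = {n} := by
      ext x; simp [Finset.mem_symmDiff]; omega
    rw [h, card_singleton]
  have c2m : ∀ m : ℕ, 3 ≤ m → (symmDiff ({2, m} : Finset ℕ) {2}).card = 1 := by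
    intro m hm
    have h : symmDiff ({2, m} : Finset ℕ) {2} = {m} := by
      ext x; simp [Finset.mem_symmDiff]; omega
    rw [h, card_singleton]
  have cdiag : ∀ m : ℕ, 3 ≤ m → (symmDiff ({1, m} : Finset ℕ) {2, m}).card = 2 := by
    intro m hm
    have h : symmDiff ({1, m} : Finset ℕ) {2, m} = {1, 2} := by
      ext x; simp [Finset.mem_symmDiff]; omega
    rw [h, card_pair (by norm_num)]
  have c4 : ∀ n m : ℕ, 3 ≤ n → 3 ≤ m → n ≠ m →
      (symmDiff ({1, n} : Finset ℕ) {2, m}).card = 4 := by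
    intro n m hn hm hnm
    have h : symmDiff ({1, n} : Finset ℕ) {2, m} = {1, 2, n, m} := by
      ext x; simp [Finset.mem_symmDiff]; omega
    rw [h, card_insert_of_notMem (by simp; omega),
      card_insert_of_notMem (by simp; omega), card_pair hnm]
  -- C ≥ 1
  have hC1 : (1:ℝ) ≤ C := by
    have h := hf _ hm1 _ hm2
    have h2 := le_trans h.1 h.2
    rw [c12] at h2
    push_cast at h2
    linarith
  have hε : (0:ℝ) < 2 - C := by linarith
  set u := f {1} with hu_def
  set v := f {2} with hv_def
  -- tail bounds for u, v
  obtain ⟨N₁, hN₁⟩ := Metric.tendsto_atTop.1 (hf0 _ hm1) ((2 - C) / 2) (by linarith)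
  obtain ⟨N₂, hN₂⟩ := Metric.tendsto_atTop.1 (hf0 _ hm2) ((2 - C) / 2) (by linarith)
  set N := max N₁ N₂ with hN_def
  -- bound on |u|
  have hbu : BddAbove (Set.range fun k => |u k|) := by
    have h : Tendsto (fun k => |u k|) atTop (nhds |(0:ℝ)|) := (hf0 _ hm1).abs
    exact h.bddAbove_range
  obtain ⟨B, hB⟩ := hbu
  have hB' : ∀ k, |u k| ≤ B := fun k => hB (Set.mem_range_self k)
  have hB0 : (0:ℝ) ≤ B := le_trans (abs_nonneg _) (hB' 0)
  -- the sequence of restrictions to the first N coordinates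
  set g : ℕ → (Fin N → ℝ) := fun j k => f ({1, j + 3} : Finset ℕ) k.val with hg_def
  have hmemball : ∀ j, g j ∈ Metric.closedBall (0 : Fin N → ℝ) (B + C) := by
    intro j
    rw [Metric.mem_closedBall, dist_zero_right]
    refine pi_norm_le_iff_of_nonneg (by linarith) |>.2 fun k => ?_
    rw [Real.norm_eq_abs]
    have h1 : |f ({1, j + 3} : Finset ℕ) k.val - u k.val| ≤ C * 1 := by
      have := coord _ (hmx (j + 3) (by omega)) _ hm1 k.val
      rwa [c1n (j + 3) (by omega), Nat.cast_one] at this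
    calc |g j k| = |(f ({1, j + 3} : Finset ℕ) k.val - u k.val) + u k.val| := by
          simp [hg_def]
      _ ≤ |f ({1, j + 3} : Finset ℕ) k.val - u k.val| + |u k.val| := abs_add_le _ _
      _ ≤ B + C := by linarith [hB' k.val, h1]
  obtain ⟨a, -, φ, hφ, hconv⟩ :=
    (isCompact_closedBall (0 : Fin N → ℝ) (B + C)).tendsto_subseq hmemball
  have hcauchy := hconv.cauchySeq
  rw [Metric.cauchySeq_iff] at hcauchy
  obtain ⟨K, hK⟩ := hcauchy (2 - C) hε
  set n := φ K + 3 with hn_def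
  set m := φ (K + 1) + 3 with hm_def
  have hn3 : 3 ≤ n := by omega
  have hm3 : 3 ≤ m := by omega
  have hnm : n ≠ m := by
    have h := hφ (show K < K + 1 by omega)
    omega
  have hdistg : dist (g (φ K)) (g (φ (K + 1))) < 2 - C :=
    hK K le_rfl (K + 1) (by omega)
  -- lower bound 4
  have h4 : (4:ℝ) ≤ ⨆ k, |f ({1, n} : Finset ℕ) k - f ({2, m} : Finset ℕ) k| := by
    have h := (hf _ (hmx n hn3) _ (hmy m hm3)).1
    rwa [c4 n m hn3 hm3 hnm] at h
  -- upper bound 2 + C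
  have hupper : (⨆ k, |f ({1, n} : Finset ℕ) k - f ({2, m} : Finset ℕ) k|) ≤ 2 + C := by
    apply ciSup_le
    intro k
    by_cases hk : k < N
    · -- use closeness of f{1,n} and f{1,m} plus diagonal bound
      have h1 : |f ({1, n} : Finset ℕ) k - f ({1, m} : Finset ℕ) k| < 2 - C := by
        have := dist_le_pi_dist (g (φ K)) (g (φ (K + 1))) ⟨k, hk⟩
        have h2 := lt_of_le_of_lt this hdistg
        rwa [Real.dist_eq] at h2
      have h2 : |f ({1, m} : Finset ℕ) k - f ({2, m} : Finset ℕ) k| ≤ C * 2 := by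
        have := coord _ (hmx m hm3) _ (hmy m hm3) k
        rwa [cdiag m hm3, Nat.cast_ofNat] at this
      calc |f ({1, n} : Finset ℕ) k - f ({2, m} : Finset ℕ) k|
          ≤ |f ({1, n} : Finset ℕ) k - f ({1, m} : Finset ℕ) k| +
            |f ({1, m} : Finset ℕ) k - f ({2, m} : Finset ℕ) k| := abs_sub_le _ _ _
        _ ≤ 2 + C := by linarith
    · -- tail: both coordinates of u, v are small
      push_neg at hk
      have hku : |u k| < (2 - C) / 2 := by
        have := hN₁ k (le_trans (le_max_left _ _) hk)
        rwa [Real.dist_eq, sub_zero] at this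
      have hkv : |v k| < (2 - C) / 2 := by
        have := hN₂ k (le_trans (le_max_right _ _) hk)
        rwa [Real.dist_eq, sub_zero] at this
      have h1 : |f ({1, n} : Finset ℕ) k - u k| ≤ C * 1 := by
        have := coord _ (hmx n hn3) _ hm1 k
        rwa [c1n n hn3, Nat.cast_one] at this
      have h2 : |f ({2, m} : Finset ℕ) k - v k| ≤ C * 1 := by
        have := coord _ (hmy m hm3) _ hm2 k
        rwa [c2m m hm3, Nat.cast_one] at this
      have : |f ({1, n} : Finset ℕ) k - f ({2, m} : Finset ℕ) k|
          ≤ |f ({1, n} : Finset ℕ) k - u k| + |u k| + |v k| +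
            |f ({2, m} : Finset ℕ) k - v k| := by
        have := abs_sub_le (f ({1, n} : Finset ℕ) k) (u k) (f ({2, m} : Finset ℕ) k)
        have h3 : |u k - f ({2, m} : Finset ℕ) k| ≤ |u k| + |v k| +
            |f ({2, m} : Finset ℕ) k - v k| := by
          have h4 := abs_sub_le (u k) (v k) (f ({2, m} : Finset ℕ) k)
          have h5 : |v k - f ({2, m} : Finset ℕ) k| = |f ({2, m} : Finset ℕ) k - v k| :=
            abs_sub_comm _ _
          calc |u k - f ({2, m} : Finset ℕ) k| ≤ |u k - v k| + |v k - f ({2, m} : Finset ℕ) k| := h4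
            _ ≤ (|u k| + |v k|) + |f ({2, m} : Finset ℕ) k - v k| := by
                rw [h5]; exact add_le_add (abs_sub _ _) le_rfl
        linarith
      linarith
  linarith
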